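/- Let μ be a Radon outer measure on ℝ^n, Ω ⊂ ℝ^n open, f, G, H ∈ C¹(Ω), integers 1 ≤ p < q ≤ n, and x ∈ ℝ^n. Assume: (i) for i = p, q the distributional derivative D_i μ is a Borel real measure on ℝ^n; (ii) x ∈ Ω ∩ A^{μ,1}, where A := { y ∈ Ω : (D_p f(y), D_q f(y)) = (G(y), H(y)) }; (iii) lim_{ρ→1−} σ(ρ) = 1 where σ(ρ) := liminf_{r→0+} μ(B_r(x))/μ(B_{ρr}(x)); (iv) for i = p, q, lim_{r→0+} |D_i μ|(B_r(x))/(r μ(B_r(x))) = 0. Then D_p H(x) = D_q G(x). -/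

import Mathlib

open MeasureTheory Metric Filter Set Topology
open scoped ENNReal NNReal

noncomputable section

/-- The support of a measure `μ` on `ℝ^n`: points all of whose balls have positive measure. -/
def spt {n : ℕ} (μ : Measure (EuclideanSpace ℝ (Fin n))) : Set (EuclideanSpace ℝ (Fin n)) :=
  {x | ∀ r : ℝ, 0 < r → 0 < μ (Metric.ball x r)}

/-- The set of `h`-superdensity points of `E` with respect to `μ`. -/
def sdp {n : ℕ} (μ : Measure (EuclideanSpace ℝ (Fin n))) (h : ℝ)
    (E : Set (EuclideanSpace ℝ (Fin n))) : Set (EuclideanSpace ℝ (Fin n)) :=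
  {x | x ∈ spt μ ∧
    Filter.Tendsto
      (fun r : ℝ => μ (Metric.ball x r \ E) / (μ (Metric.ball x r) * ENNReal.ofReal (r ^ h)))
      (nhdsWithin 0 (Set.Ioi 0)) (nhds 0)}

/-- The base operator `b^{μ,h}` associated to `μ` and `h`. -/
def baseOp {n : ℕ} (μ : Measure (EuclideanSpace ℝ (Fin n))) (h : ℝ)
    (A : Set (EuclideanSpace ℝ (Fin n))) : Set (EuclideanSpace ℝ (Fin n)) :=
  {x | x ∈ spt μ ∧
    0 < Filter.limsup
      (fun r : ℝ => μ (Metric.ball x r ∩ A) / (μ (Metric.ball x r) * ENNReal.ofReal (r ^ h)))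
      (nhdsWithin 0 (Set.Ioi 0))}

section Helpers

set_option linter.unusedSectionVars false

variable {E : Type*} [NormedAddCommGroup E] [NormedSpace ℝ E]

lemma glue_cont {Ω : Set E} (hΩ : IsOpen Ω) {g c : E → ℝ} (hg : ContinuousOn g Ω)
    (hc : Continuous c) (hsupp : tsupport c ⊆ Ω) : Continuous (fun y => c y * g y) := by
  rw [continuous_iff_continuousAt]
  intro y
  by_cases hy : y ∈ Ω
  · exact (hc.continuousAt).mul (hg.continuousAt (hΩ.mem_nhds hy))
  · have hy' : y ∈ (tsupport c)ᶜ := fun h => hy (hsupp h)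
    have : ∀ᶠ z in nhds y, c z * g z = 0 := by
      filter_upwards [(isClosed_tsupport c).isOpen_compl.mem_nhds hy'] with z hz
      simp [image_eq_zero_of_notMem_tsupport hz]
    exact continuousAt_const.congr
      (EventuallyEq.symm (by filter_upwards [this] with z hz; exact hz))

lemma glue_smul {Ω : Set E} (hΩ : IsOpen Ω) {g c : E → ℝ} (hg : ContDiffOn ℝ 1 g Ω)
    (hc : ContDiff ℝ 1 c) (hsupp : tsupport c ⊆ Ω) :
    ContDiff ℝ 1 (fun y => c y * g y) ∧
      ∀ y (v : E), fderiv ℝ (fun z => c z * g z) y v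
        = c y * fderiv ℝ g y v + g y * fderiv ℝ c y v := by
  constructor
  · rw [contDiff_iff_contDiffAt]
    intro y
    by_cases hy : y ∈ Ω
    · exact (hc.contDiffAt).mul ((hg y hy).contDiffAt (hΩ.mem_nhds hy))
    · have hy' : y ∈ (tsupport c)ᶜ := fun h => hy (hsupp h)
      have hev : (fun z => c z * g z) =ᶠ[nhds y] (fun _ => (0:ℝ)) := by
        filter_upwards [(isClosed_tsupport c).isOpen_compl.mem_nhds hy'] with z hz
        simp [image_eq_zero_of_notMem_tsupport hz]
      exact ContDiffAt.congr_of_eventuallyEq contDiffAt_const hev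
  · intro y v
    by_cases hy : y ∈ Ω
    · have hgd : DifferentiableAt ℝ g y :=
        (hg.differentiableOn one_ne_zero).differentiableAt (hΩ.mem_nhds hy)
      have hcd : DifferentiableAt ℝ c y := hc.differentiable one_ne_zero y
      rw [fderiv_fun_mul hcd hgd]
      simp [mul_comm]
    · have hy' : y ∈ (tsupport c)ᶜ := fun h => hy (hsupp h)
      have hmem : (tsupport c)ᶜ ∈ nhds y := (isClosed_tsupport c).isOpen_compl.mem_nhds hy'
      have hev : (fun z => c z * g z) =ᶠ[nhds y] (fun _ => (0:ℝ)) := by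
        filter_upwards [hmem] with z hz
        simp [image_eq_zero_of_notMem_tsupport hz]
      have h1 : fderiv ℝ (fun z => c z * g z) y = fderiv ℝ (fun _ => (0:ℝ)) y :=
        Filter.EventuallyEq.fderiv_eq hev
      have hc0 : c y = 0 := image_eq_zero_of_notMem_tsupport hy'
      have hcev : c =ᶠ[nhds y] (fun _ => (0:ℝ)) := by
        filter_upwards [hmem] with z hz
        exact image_eq_zero_of_notMem_tsupport hz
      have h2 : fderiv ℝ c y = fderiv ℝ (fun _ => (0:ℝ)) y := hcev.fderiv_eq
      rw [h1, h2, hc0]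
      simp

lemma integral_bound {α : Type*} [MeasurableSpace α] {m : Measure α} {g : α → ℝ}
    (hgi : Integrable g m) {s : Set α} {C : ℝ} (hC : 0 ≤ C) (hms : m s ≠ ⊤)
    (hb : ∀ y ∈ s, |g y| ≤ C) (h0 : ∀ y, y ∉ s → g y = 0) :
    |∫ y, g y ∂m| ≤ C * (m s).toReal := by
  set t := toMeasurable m s with ht
  have hst : s ⊆ t := subset_toMeasurable m s
  have hmt : m t = m s := measure_toMeasurable s
  have h0' : ∀ y, y ∉ t → g y = 0 := fun y hy => h0 y (fun h => hy (hst h))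
  have hb' : ∀ y ∈ t, ‖g y‖ ≤ C := by
    intro y hy
    by_cases hys : y ∈ s
    · exact hb y hys
    · simp [h0 y hys, hC]
  have heq : ∫ y in t, g y ∂m = ∫ y, g y ∂m :=
    setIntegral_eq_integral_of_forall_compl_eq_zero h0'
  rw [← heq]
  calc |∫ y in t, g y ∂m| ≤ C * (m t).toReal :=
        norm_setIntegral_le_of_norm_le_const (lt_top_iff_ne_top.2 (hmt ▸ hms)) hb'
    _ = C * (m s).toReal := by rw [hmt]

variable [MeasurableSpace E] [BorelSpace E]

lemma fderiv_apply_contOn {Ω : Set E} (hΩ : IsOpen Ω) {g : E → ℝ} (hg : ContDiffOn ℝ 1 g Ω)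
    (v : E) : ContinuousOn (fun y => fderiv ℝ g y v) Ω :=
  (hg.continuousOn_fderiv_of_isOpen hΩ le_rfl).clm_apply continuousOn_const

lemma tsupport_fderiv_apply_subset' {c : E → ℝ} (v : E) :
    tsupport (fun y => fderiv ℝ c y v) ⊆ tsupport c := by
  apply closure_minimal _ (isClosed_tsupport c)
  intro y hy
  have : fderiv ℝ c y ≠ 0 := by
    intro h0; apply hy; simp only [Function.mem_support] at hy ⊢
    rw [h0] at hy; simp at hy
  exact support_fderiv_subset ℝ this

lemma glue_integrable {m : Measure E} [IsFiniteMeasureOnCompacts m] {Ω : Set E} (hΩ : IsOpen Ω)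
    {g c : E → ℝ} (hg : ContinuousOn g Ω) (hc : Continuous c) (hcs : HasCompactSupport c)
    (hsupp : tsupport c ⊆ Ω) : Integrable (fun y => c y * g y) m := by
  have hcont := glue_cont hΩ hg hc hsupp
  have hsupp2 : HasCompactSupport (fun y => c y * g y) := hcs.mul_right
  exact hcont.integrable_of_hasCompactSupport hsupp2

lemma deriv_glue_integrable {m : Measure E} [IsFiniteMeasureOnCompacts m] {Ω : Set E}
    (hΩ : IsOpen Ω) {g c : E → ℝ} (hg : ContinuousOn g Ω) (hc : ContDiff ℝ 1 c)
    (hcs : HasCompactSupport c) (hsupp : tsupport c ⊆ Ω) (v : E) :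
    Integrable (fun y => fderiv ℝ c y v * g y) m := by
  have hc' : Continuous (fun y => fderiv ℝ c y v) :=
    (hc.continuous_fderiv_apply one_ne_zero).comp (continuous_id.prodMk continuous_const)
  have hsub := tsupport_fderiv_apply_subset' (c := c) v
  have hcs' : HasCompactSupport (fun y => fderiv ℝ c y v) :=
    HasCompactSupport.of_support_subset_isCompact hcs (subset_closure.trans hsub)
  exact glue_integrable hΩ hg hc' hcs' (hsub.trans hsupp)

lemma key_identity (μ : Measure E) [IsLocallyFiniteMeasure μ]
    (νpos νneg : Measure E) [IsFiniteMeasure νpos] [IsFiniteMeasure νneg] (v : E)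
    (hν : ∀ φ : E → ℝ, ContDiff ℝ 1 φ → HasCompactSupport φ →
      ∫ y, fderiv ℝ φ y v ∂μ = -((∫ y, φ y ∂νpos) - (∫ y, φ y ∂νneg)))
    {Ω : Set E} (hΩ : IsOpen Ω) (g c : E → ℝ) (hg : ContDiffOn ℝ 1 g Ω)
    (hc : ContDiff ℝ 1 c) (hcs : HasCompactSupport c) (hsupp : tsupport c ⊆ Ω) :
    (∫ y, fderiv ℝ c y v * g y ∂μ) + (∫ y, c y * fderiv ℝ g y v ∂μ)
      = -((∫ y, c y * g y ∂νpos) - (∫ y, c y * g y ∂νneg)) := by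
  obtain ⟨hcg, hfder⟩ := glue_smul hΩ hg hc hsupp
  have hcgs : HasCompactSupport (fun y => c y * g y) := hcs.mul_right
  have h1 := hν (fun y => c y * g y) hcg hcgs
  have h2 : ∫ y, fderiv ℝ (fun z => c z * g z) y v ∂μ
      = (∫ y, fderiv ℝ c y v * g y ∂μ) + (∫ y, c y * fderiv ℝ g y v ∂μ) := by
    have hi1 : Integrable (fun y => fderiv ℝ c y v * g y) μ :=
      deriv_glue_integrable hΩ (hg.continuousOn) hc hcs hsupp v
    have hi2 : Integrable (fun y => c y * fderiv ℝ g y v) μ :=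
      glue_integrable hΩ (fderiv_apply_contOn hΩ hg v) (hc.continuous) hcs hsupp
    rw [← integral_add hi1 hi2]
    apply integral_congr_ae
    filter_upwards with y
    rw [hfder y v]; ring
  rw [← h2, h1]

end Helpers


set_option maxHeartbeats 2000000 in
theorem stmt_19 {n : ℕ} (μ : Measure (EuclideanSpace ℝ (Fin n)))
    [IsLocallyFiniteMeasure μ] [μ.Regular]
    (Ω : Set (EuclideanSpace ℝ (Fin n))) (hΩ : IsOpen Ω)
    (f G H : EuclideanSpace ℝ (Fin n) → ℝ)
    (hf : ContDiffOn ℝ 1 f Ω) (hG : ContDiffOn ℝ 1 G Ω) (hH : ContDiffOn ℝ 1 H Ω)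
    (p q : Fin n) (hpq : p < q)
    (x : EuclideanSpace ℝ (Fin n))
    (νp νq : SignedMeasure (EuclideanSpace ℝ (Fin n)))
    -- (i): `νp` is the `p`-th distributional derivative of `μ` (a Borel real measure)
    (hνp : ∀ φ : EuclideanSpace ℝ (Fin n) → ℝ, ContDiff ℝ 1 φ → HasCompactSupport φ →
      ∫ y, fderiv ℝ φ y (EuclideanSpace.single p 1) ∂μ =
        -((∫ y, φ y ∂νp.toJordanDecomposition.posPart) -
          (∫ y, φ y ∂νp.toJordanDecomposition.negPart)))
    -- (i): `νq` is the `q`-th distributional derivative of `μ`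
    (hνq : ∀ φ : EuclideanSpace ℝ (Fin n) → ℝ, ContDiff ℝ 1 φ → HasCompactSupport φ →
      ∫ y, fderiv ℝ φ y (EuclideanSpace.single q 1) ∂μ =
        -((∫ y, φ y ∂νq.toJordanDecomposition.posPart) -
          (∫ y, φ y ∂νq.toJordanDecomposition.negPart)))
    -- (ii): `x` is a 1-superdensity point of the coincidence set `A`
    (hx : x ∈ Ω ∩ sdp μ 1 {y | y ∈ Ω ∧
      fderiv ℝ f y (EuclideanSpace.single p 1) = G y ∧
      fderiv ℝ f y (EuclideanSpace.single q 1) = H y})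
    -- (iii)
    (hσ : Filter.Tendsto
      (fun ρ : ℝ => Filter.liminf
        (fun r : ℝ => μ (Metric.ball x r) / μ (Metric.ball x (ρ * r)))
        (nhdsWithin 0 (Set.Ioi 0)))
      (nhdsWithin 1 (Set.Iio 1)) (nhds 1))
    -- (iv)
    (hvp : Filter.Tendsto
      (fun r : ℝ => νp.totalVariation (Metric.ball x r) /
        (ENNReal.ofReal r * μ (Metric.ball x r)))
      (nhdsWithin 0 (Set.Ioi 0)) (nhds 0))
    (hvq : Filter.Tendsto
      (fun r : ℝ => νq.totalVariation (Metric.ball x r) /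
        (ENNReal.ofReal r * μ (Metric.ball x r)))
      (nhdsWithin 0 (Set.Ioi 0)) (nhds 0)) :
    fderiv ℝ H x (EuclideanSpace.single p 1) = fderiv ℝ G x (EuclideanSpace.single q 1) := by
  classical
  set ep : EuclideanSpace ℝ (Fin n) := EuclideanSpace.single p 1 with hep
  set eq' : EuclideanSpace ℝ (Fin n) := EuclideanSpace.single q 1 with heq'
  set A : Set (EuclideanSpace ℝ (Fin n)) :=
    {y | y ∈ Ω ∧ fderiv ℝ f y ep = G y ∧ fderiv ℝ f y eq' = H y} with hAdef
  obtain ⟨hxΩ, hspt, hxA⟩ := hx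
  set a : ℝ := fderiv ℝ H x ep with ha
  set b : ℝ := fderiv ℝ G x eq' with hb
  by_contra hab
  have hδpos : 0 < |a - b| := abs_pos.2 (sub_ne_zero.2 hab)
  set δ : ℝ := |a - b| with hδ
  -- a radius r₀ ≤ 1 with closedBall x r₀ ⊆ Ω
  obtain ⟨r₀, hr₀pos, hr₀1, hr₀Ω⟩ :
      ∃ r₀ : ℝ, 0 < r₀ ∧ r₀ ≤ 1 ∧ closedBall x r₀ ⊆ Ω := by
    obtain ⟨r', hr'pos, hball⟩ := Metric.isOpen_iff.1 hΩ x hxΩ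
    refine ⟨min (r'/2) 1, by positivity, min_le_right _ _, ?_⟩
    refine subset_trans (fun y hy => ?_) hball
    have : dist y x ≤ min (r'/2) 1 := mem_closedBall.1 hy
    have h2 : dist y x ≤ r'/2 := le_trans this (min_le_left _ _)
    exact mem_ball.2 (lt_of_le_of_lt h2 (by linarith))
  have hKcpt : IsCompact (closedBall x r₀) := isCompact_closedBall x r₀
  -- bounds for the various functions on the closed ball
  have getBound : ∀ u : EuclideanSpace ℝ (Fin n) → ℝ, ContinuousOn u Ω →
      ∃ C : ℝ, 0 ≤ C ∧ ∀ y ∈ closedBall x r₀, |u y| ≤ C := by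
    intro u hu
    obtain ⟨C, hC⟩ := hKcpt.exists_bound_of_continuousOn (hu.mono hr₀Ω)
    exact ⟨max C 0, le_max_right _ _, fun y hy =>
      le_trans (by simpa [Real.norm_eq_abs] using hC y hy) (le_max_left _ _)⟩
  obtain ⟨Cf, hCf0, hCf⟩ := getBound f hf.continuousOn
  obtain ⟨Ch, hCh0, hCh⟩ := getBound H hH.continuousOn
  obtain ⟨Cg, hCg0, hCg⟩ := getBound G hG.continuousOn
  obtain ⟨Cr1, hCr10, hCr1⟩ := getBound (fun y => H y - fderiv ℝ f y eq')
    (hH.continuousOn.sub (fderiv_apply_contOn hΩ hf eq'))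
  obtain ⟨Cr2, hCr20, hCr2⟩ := getBound (fun y => G y - fderiv ℝ f y ep)
    (hG.continuousOn.sub (fderiv_apply_contOn hΩ hf ep))
  -- choose ρ₀ ∈ (0,1) with small liminf
  obtain ⟨ρ₀, hρlim, hρ0, hρ1⟩ :
      ∃ ρ₀ : ℝ, (Filter.liminf
        (fun r : ℝ => μ (Metric.ball x r) / μ (Metric.ball x (ρ₀ * r)))
        (nhdsWithin 0 (Set.Ioi 0))) < 2 ∧ 0 < ρ₀ ∧ ρ₀ < 1 := by
    have h1 : ∀ᶠ ρ in nhdsWithin (1:ℝ) (Set.Iio 1), (Filter.liminf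
        (fun r : ℝ => μ (Metric.ball x r) / μ (Metric.ball x (ρ * r)))
        (nhdsWithin 0 (Set.Ioi 0))) < 2 :=
      hσ.eventually_lt_const (by norm_num)
    have h2 : ∀ᶠ ρ in nhdsWithin (1:ℝ) (Set.Iio 1), 0 < ρ :=
      eventually_nhdsWithin_of_eventually_nhds (eventually_gt_nhds (by norm_num))
    have h3 : ∀ᶠ ρ in nhdsWithin (1:ℝ) (Set.Iio 1), ρ < 1 := by
      filter_upwards [self_mem_nhdsWithin] with ρ hρ using hρ
    exact ((h1.and (h2.and h3)).exists).imp (fun ρ h => ⟨h.1, h.2.1, h.2.2⟩)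
  -- the bump function
  set Φ : ContDiffBump (0 : EuclideanSpace ℝ (Fin n)) :=
    ⟨ρ₀, (1+ρ₀)/2, hρ0, by linarith⟩ with hΦdef
  set Φf : EuclideanSpace ℝ (Fin n) → ℝ := fun z => Φ z with hΦf
  have hΦsm : ContDiff ℝ 2 Φf := Φ.contDiff
  have hΦcs : HasCompactSupport Φf := Φ.hasCompactSupport
  obtain ⟨M, hM1, hM⟩ : ∃ M : ℝ, 1 ≤ M ∧ ∀ z, ‖fderiv ℝ Φf z‖ ≤ M := by
    have hc : Continuous (fderiv ℝ Φf) :=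
      (hΦsm.fderiv_right (m := 1) (by norm_num)).continuous
    have hcs : HasCompactSupport (fderiv ℝ Φf) := hΦcs.fderiv (𝕜 := ℝ)
    obtain ⟨M', hM'⟩ :=
      (hcs : IsCompact (tsupport (fderiv ℝ Φf))).exists_bound_of_continuousOn hc.continuousOn
    refine ⟨max M' 1, le_max_right _ _, fun z => ?_⟩
    by_cases hz : z ∈ tsupport (fderiv ℝ Φf)
    · exact le_trans (hM' z hz) (le_max_left _ _)
    · have : fderiv ℝ Φf z = 0 := image_eq_zero_of_notMem_tsupport hz
      rw [this]; simp
  have hMpos : 0 < M := lt_of_lt_of_le one_pos hM1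
  set K : ℝ := Ch + Cg + 2*Cf*M + 2*(Cr1 + Cr2)*M + 2 with hK
  have hKpos : 0 < K := by positivity
  set δ₁ : ℝ := δ/(4*K) with hδ₁
  have hδ₁pos : 0 < δ₁ := by positivity
  -- continuity radius
  obtain ⟨r₂, hr₂pos, hr₂sub⟩ : ∃ r₂ : ℝ, 0 < r₂ ∧ ∀ y ∈ ball x r₂,
      |fderiv ℝ H y ep - a| ≤ δ₁ ∧ |fderiv ℝ G y eq' - b| ≤ δ₁ := by
    have hHc : ContinuousAt (fun y => fderiv ℝ H y ep) x :=
      (fderiv_apply_contOn hΩ hH ep).continuousAt (hΩ.mem_nhds hxΩ)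
    have hGc : ContinuousAt (fun y => fderiv ℝ G y eq') x :=
      (fderiv_apply_contOn hΩ hG eq').continuousAt (hΩ.mem_nhds hxΩ)
    have h1 : ∀ᶠ y in nhds x, |fderiv ℝ H y ep - a| ≤ δ₁ := by
      have := hHc.eventually_mem (Metric.closedBall_mem_nhds (fderiv ℝ H x ep) hδ₁pos)
      filter_upwards [this] with y hy
      rw [ha]
      simpa [Real.dist_eq] using hy
    have h2 : ∀ᶠ y in nhds x, |fderiv ℝ G y eq' - b| ≤ δ₁ := by
      have := hGc.eventually_mem (Metric.closedBall_mem_nhds (fderiv ℝ G x eq') hδ₁pos)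
      filter_upwards [this] with y hy
      rw [hb]
      simpa [Real.dist_eq] using hy
    obtain ⟨r₂, hr₂pos, hsub⟩ := Metric.eventually_nhds_iff_ball.1 (h1.and h2)
    exact ⟨r₂, hr₂pos, fun y hy => hsub y hy⟩
  -- choose a good radius r
  obtain ⟨r, hfrq, hrpos, hrsize, hEVp, hEVq, hEVA⟩ :
      ∃ r : ℝ, (μ (Metric.ball x r) / μ (Metric.ball x (ρ₀ * r)) < 2) ∧ 0 < r ∧
        r < min r₀ r₂ ∧
        (νp.totalVariation (Metric.ball x r) /
          (ENNReal.ofReal r * μ (Metric.ball x r)) < ENNReal.ofReal δ₁) ∧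
        (νq.totalVariation (Metric.ball x r) /
          (ENNReal.ofReal r * μ (Metric.ball x r)) < ENNReal.ofReal δ₁) ∧
        (μ (Metric.ball x r \ A) /
          (μ (Metric.ball x r) * ENNReal.ofReal (r ^ (1:ℝ))) < ENNReal.ofReal δ₁) := by
    have hδ₁' : (0:ℝ≥0∞) < ENNReal.ofReal δ₁ := ENNReal.ofReal_pos.2 hδ₁pos
    have hEp := hvp.eventually_lt_const hδ₁'
    have hEq := hvq.eventually_lt_const hδ₁'
    have hEA := hxA.eventually_lt_const hδ₁'
    have hE0 : ∀ᶠ r in nhdsWithin (0:ℝ) (Set.Ioi 0), 0 < r := by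
      filter_upwards [self_mem_nhdsWithin] with r hr using hr
    have hEsz : ∀ᶠ r in nhdsWithin (0:ℝ) (Set.Ioi 0), r < min r₀ r₂ :=
      eventually_nhdsWithin_of_eventually_nhds (eventually_lt_nhds (by positivity))
    have hFrq : ∃ᶠ r in nhdsWithin (0:ℝ) (Set.Ioi 0),
        μ (Metric.ball x r) / μ (Metric.ball x (ρ₀ * r)) < 2 := by
      by_contra hcon
      rw [Filter.not_frequently] at hcon
      have h2 : ∀ᶠ r in nhdsWithin (0:ℝ) (Set.Ioi 0),
          (2:ℝ≥0∞) ≤ μ (Metric.ball x r) / μ (Metric.ball x (ρ₀ * r)) := by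
        filter_upwards [hcon] with r hr using not_lt.1 hr
      have := le_liminf_of_le (by isBoundedDefault) h2
      exact absurd hρlim (not_lt.2 this)
    obtain ⟨r, h1, h2, h3, h4, h5, h6⟩ :=
      (hFrq.and_eventually (hE0.and (hEsz.and (hEp.and (hEq.and hEA))))).exists
    exact ⟨r, h1, h2, h3, h4, h5, h6⟩
  -- basic consequences of the choice of r
  have hrr₀ : r ≤ r₀ := le_of_lt (lt_of_lt_of_le hrsize (min_le_left _ _))
  have hrr₂ : r < r₂ := lt_of_lt_of_le hrsize (min_le_right _ _)
  have hr1 : r ≤ 1 := le_trans hrr₀ hr₀1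
  set B : Set (EuclideanSpace ℝ (Fin n)) := Metric.ball x r with hBdef
  have hBK : B ⊆ closedBall x r₀ :=
    ball_subset_closedBall.trans (closedBall_subset_closedBall hrr₀)
  have hBΩ : B ⊆ Ω := hBK.trans hr₀Ω
  have hμB0 : μ B ≠ 0 := (hspt r hrpos).ne'
  have hμBfin : μ B ≠ ⊤ := (lt_of_le_of_lt (measure_mono hBK) hKcpt.measure_lt_top).ne
  have hμT0 : 0 < (μ B).toReal := ENNReal.toReal_pos hμB0 hμBfin
  have hρr : 0 < ρ₀ * r := by positivity
  have hρrr : ρ₀ * r ≤ r := mul_le_of_le_one_left hrpos.le hρ1.le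
  have hμS0 : μ (Metric.ball x (ρ₀ * r)) ≠ 0 := (hspt _ hρr).ne'
  have hμSfin : μ (Metric.ball x (ρ₀ * r)) ≠ ⊤ :=
    (lt_of_le_of_lt (measure_mono ((ball_subset_ball hρrr).trans hBK)) hKcpt.measure_lt_top).ne
  have hμSpos : 0 < (μ (Metric.ball x (ρ₀ * r))).toReal := ENNReal.toReal_pos hμS0 hμSfin
  -- real versions of the smallness conditions
  have hconv : ∀ tv : ℝ≥0∞, tv / (ENNReal.ofReal r * μ B) < ENNReal.ofReal δ₁ →
      tv.toReal ≤ δ₁ * r * (μ B).toReal := by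
    intro tv htv
    have hd0 : ENNReal.ofReal r * μ B ≠ 0 :=
      mul_ne_zero (ENNReal.ofReal_pos.2 hrpos).ne' hμB0
    have hdfin : ENNReal.ofReal r * μ B ≠ ⊤ := ENNReal.mul_ne_top ENNReal.ofReal_ne_top hμBfin
    have hlt : tv < ENNReal.ofReal δ₁ * (ENNReal.ofReal r * μ B) :=
      (ENNReal.div_lt_iff (Or.inl hd0) (Or.inl hdfin)).1 htv
    have h2 := ENNReal.toReal_mono
      (ENNReal.mul_ne_top ENNReal.ofReal_ne_top hdfin) hlt.le
    rw [ENNReal.toReal_mul, ENNReal.toReal_mul, ENNReal.toReal_ofReal hδ₁pos.le,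
      ENNReal.toReal_ofReal hrpos.le] at h2
    linarith
  have htvp : (νp.totalVariation B).toReal ≤ δ₁ * r * (μ B).toReal := hconv _ hEVp
  have htvq : (νq.totalVariation B).toReal ≤ δ₁ * r * (μ B).toReal := hconv _ hEVq
  have htvA : (μ (B \ A)).toReal ≤ δ₁ * r * (μ B).toReal := by
    apply hconv
    rw [Real.rpow_one] at hEVA
    rw [mul_comm]
    exact hEVA
  have hμBAfin : μ (B \ A) ≠ ⊤ :=
    (lt_of_le_of_lt (measure_mono diff_subset) (lt_top_iff_ne_top.2 hμBfin)).ne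
  have hfr : (μ B).toReal ≤ 2 * (μ (Metric.ball x (ρ₀ * r))).toReal := by
    have hlt : μ B < 2 * μ (Metric.ball x (ρ₀ * r)) :=
      (ENNReal.div_lt_iff (Or.inl hμS0) (Or.inl hμSfin)).1 hfrq
    have h2 := ENNReal.toReal_mono (by finiteness) hlt.le
    rw [ENNReal.toReal_mul] at h2
    simpa using h2
  -- the scaled bump function
  set τ : ℝ := (1 + ρ₀) / 2 with hτdef
  have hτ1 : τ < 1 := by rw [hτdef]; linarith
  have hτρ : ρ₀ < τ := by rw [hτdef]; linarith
  have hτpos : 0 < τ := by rw [hτdef]; linarith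
  set φ : EuclideanSpace ℝ (Fin n) → ℝ := fun y => Φf (r⁻¹ • (y - x)) with hφdef
  have hLsm : ContDiff ℝ 2 (fun y : EuclideanSpace ℝ (Fin n) => r⁻¹ • (y - x)) :=
    (contDiff_id.sub contDiff_const).const_smul r⁻¹
  have hφ2 : ContDiff ℝ 2 φ := hΦsm.comp hLsm
  have hφ1 : ContDiff ℝ 1 φ := hφ2.of_le (by norm_num)
  have hφ01 : ∀ y, 0 ≤ φ y ∧ φ y ≤ 1 := fun y => ⟨Φ.nonneg, Φ.le_one⟩
  have hnormL : ∀ y : EuclideanSpace ℝ (Fin n), ‖r⁻¹ • (y - x)‖ = ‖y - x‖ / r := by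
    intro y
    rw [norm_smul, Real.norm_eq_abs, abs_of_pos (inv_pos.2 hrpos)]
    rw [div_eq_inv_mul]
  have hΦrIn : Φ.rIn = ρ₀ := rfl
  have hΦrOut : Φ.rOut = τ := rfl
  have hφ1on : ∀ y ∈ closedBall x (ρ₀ * r), φ y = 1 := by
    intro y hy
    apply Φ.one_of_mem_closedBall
    rw [mem_closedBall, dist_zero_right, hnormL, hΦrIn, div_le_iff₀ hrpos]
    have := mem_closedBall.1 hy
    rw [dist_eq_norm] at this
    linarith [this]
  have hφ0out : ∀ y, y ∉ Metric.ball x (τ * r) → φ y = 0 := by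
    intro y hy
    apply Φ.zero_of_le_dist
    rw [dist_zero_right, hnormL, hΦrOut, le_div_iff₀ hrpos]
    have := mem_ball.not.1 hy
    rw [dist_eq_norm, not_lt] at this
    linarith [this]
  have htsupp : tsupport φ ⊆ closedBall x (τ * r) := by
    apply closure_minimal _ isClosed_closedBall
    intro y hy
    by_contra hyb
    exact hy (hφ0out y (fun hmem => hyb (ball_subset_closedBall hmem)))
  have hτrB : closedBall x (τ * r) ⊆ B := by
    rw [hBdef]
    exact closedBall_subset_ball (mul_lt_of_lt_one_left hrpos hτ1)
  have htsuppB : tsupport φ ⊆ B := htsupp.trans hτrB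
  have htsuppΩ : tsupport φ ⊆ Ω := htsuppB.trans hBΩ
  have hcs : HasCompactSupport φ :=
    HasCompactSupport.intro (isCompact_closedBall x (τ * r))
      (fun y hy => hφ0out y (fun hmem => hy (ball_subset_closedBall hmem)))
  have hφ0B : ∀ y, y ∉ B → φ y = 0 := fun y hy =>
    image_eq_zero_of_notMem_tsupport (fun h => hy (htsuppB h))
  -- derivative of the bump
  have hφder : ∀ (y v : EuclideanSpace ℝ (Fin n)),
      fderiv ℝ φ y v = r⁻¹ * fderiv ℝ Φf (r⁻¹ • (y - x)) v := by
    intro y v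
    have hLder : HasFDerivAt (fun z : EuclideanSpace ℝ (Fin n) => r⁻¹ • (z - x))
        (r⁻¹ • ContinuousLinearMap.id ℝ (EuclideanSpace ℝ (Fin n))) y :=
      ((hasFDerivAt_id y).sub_const x).const_smul r⁻¹
    have hΦd : HasFDerivAt Φf (fderiv ℝ Φf (r⁻¹ • (y - x))) (r⁻¹ • (y - x)) :=
      ((hΦsm.differentiable (by norm_num)) _).hasFDerivAt
    have hcomp := hΦd.comp y hLder
    rw [hφdef]
    show fderiv ℝ (Φf ∘ fun z => r⁻¹ • (z - x)) y v = r⁻¹ * fderiv ℝ Φf (r⁻¹ • (y - x)) v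
    rw [hcomp.fderiv]
    simp [ContinuousLinearMap.smul_apply, _root_.map_smul, smul_eq_mul]
  have hnep : ‖ep‖ = 1 := by rw [hep, EuclideanSpace.norm_single]; norm_num
  have hneq : ‖eq'‖ = 1 := by rw [heq', EuclideanSpace.norm_single]; norm_num
  have hφdb : ∀ (y v : EuclideanSpace ℝ (Fin n)), ‖v‖ = 1 → |fderiv ℝ φ y v| ≤ M / r := by
    intro y v hv
    rw [hφder y v]
    have h1 : |fderiv ℝ Φf (r⁻¹ • (y - x)) v| ≤ M := by
      have h2 := (fderiv ℝ Φf (r⁻¹ • (y - x))).le_opNorm v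
      rw [hv, mul_one] at h2
      exact le_trans (by simpa [Real.norm_eq_abs] using h2) (hM _)
    rw [abs_mul, abs_of_pos (inv_pos.2 hrpos), div_eq_inv_mul]
    exact mul_le_mul_of_nonneg_left h1 (inv_pos.2 hrpos).le
  have hDφ0 : ∀ y, y ∉ B → fderiv ℝ φ y = 0 := by
    intro y hy
    by_contra h0
    exact hy (htsuppB (support_fderiv_subset ℝ (f := φ) h0))
  -- names for the Jordan parts
  set Pp : Measure (EuclideanSpace ℝ (Fin n)) := νp.toJordanDecomposition.posPart with hPp
  set Np : Measure (EuclideanSpace ℝ (Fin n)) := νp.toJordanDecomposition.negPart with hNp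
  set Pq : Measure (EuclideanSpace ℝ (Fin n)) := νq.toJordanDecomposition.posPart with hPq
  set Nq : Measure (EuclideanSpace ℝ (Fin n)) := νq.toJordanDecomposition.negPart with hNq
  -- derivative bumps
  have hcDq : ContDiff ℝ 1 (fun y => fderiv ℝ φ y eq') :=
    (hφ2.fderiv_right (m := 1) (by norm_num)).clm_apply contDiff_const
  have hcDp : ContDiff ℝ 1 (fun y => fderiv ℝ φ y ep) :=
    (hφ2.fderiv_right (m := 1) (by norm_num)).clm_apply contDiff_const
  have hsubDq : tsupport (fun y => fderiv ℝ φ y eq') ⊆ tsupport φ :=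
    tsupport_fderiv_apply_subset' eq'
  have hsubDp : tsupport (fun y => fderiv ℝ φ y ep) ⊆ tsupport φ :=
    tsupport_fderiv_apply_subset' ep
  have hcsDq : HasCompactSupport (fun y => fderiv ℝ φ y eq') :=
    HasCompactSupport.of_support_subset_isCompact hcs (subset_closure.trans hsubDq)
  have hcsDp : HasCompactSupport (fun y => fderiv ℝ φ y ep) :=
    HasCompactSupport.of_support_subset_isCompact hcs (subset_closure.trans hsubDp)
  -- the four integration-by-parts identities
  have EqH := key_identity μ Pp Np ep hνp hΩ H φ hH hφ1 hcs htsuppΩ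
  have EqG := key_identity μ Pq Nq eq' hνq hΩ G φ hG hφ1 hcs htsuppΩ
  have Eqf1' := key_identity μ Pp Np ep hνp hΩ f (fun y => fderiv ℝ φ y eq') hf hcDq hcsDq
    (hsubDq.trans htsuppΩ)
  have Eqf2' := key_identity μ Pq Nq eq' hνq hΩ f (fun y => fderiv ℝ φ y ep) hf hcDp hcsDp
    (hsubDp.trans htsuppΩ)
  have Eqf1 : (∫ y, fderiv ℝ (fun z => fderiv ℝ φ z eq') y ep * f y ∂μ)
      + (∫ y, fderiv ℝ φ y eq' * fderiv ℝ f y ep ∂μ)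
      = -((∫ y, fderiv ℝ φ y eq' * f y ∂Pp) - (∫ y, fderiv ℝ φ y eq' * f y ∂Np)) := by
    simpa using Eqf1'
  have Eqf2 : (∫ y, fderiv ℝ (fun z => fderiv ℝ φ z ep) y eq' * f y ∂μ)
      + (∫ y, fderiv ℝ φ y ep * fderiv ℝ f y eq' ∂μ)
      = -((∫ y, fderiv ℝ φ y ep * f y ∂Pq) - (∫ y, fderiv ℝ φ y ep * f y ∂Nq)) := by
    simpa using Eqf2'
  -- symmetry of the second derivative of the bump
  have hsym : ∀ y, fderiv ℝ (fun z => fderiv ℝ φ z eq') y ep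
      = fderiv ℝ (fun z => fderiv ℝ φ z ep) y eq' := by
    intro y
    have hd : DifferentiableAt ℝ (fderiv ℝ φ) y :=
      ((hφ2.fderiv_right (m := 1) (by norm_num)).differentiable one_ne_zero) y
    have h1 : fderiv ℝ (fun z => fderiv ℝ φ z eq') y ep
        = fderiv ℝ (fderiv ℝ φ) y ep eq' := by
      rw [fderiv_clm_apply hd (differentiableAt_const eq')]
      simp
    have h2 : fderiv ℝ (fun z => fderiv ℝ φ z ep) y eq'
        = fderiv ℝ (fderiv ℝ φ) y eq' ep := by
      rw [fderiv_clm_apply hd (differentiableAt_const ep)]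
      simp
    have hsymm : IsSymmSndFDerivAt ℝ φ y := (hφ2.contDiffAt).isSymmSndFDerivAt (by simp)
    rw [h1, h2, hsymm ep eq']
  have Seq : (∫ y, fderiv ℝ (fun z => fderiv ℝ φ z eq') y ep * f y ∂μ)
      = (∫ y, fderiv ℝ (fun z => fderiv ℝ φ z ep) y eq' * f y ∂μ) :=
    integral_congr_ae (Filter.Eventually.of_forall (fun y => by simp only [hsym y]))
  -- integrability facts
  have intφ : Integrable φ μ := hφ1.continuous.integrable_of_hasCompactSupport hcs
  have int2 : Integrable (fun y => φ y * fderiv ℝ H y ep) μ :=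
    glue_integrable hΩ (fderiv_apply_contOn hΩ hH ep) hφ1.continuous hcs htsuppΩ
  have int4 : Integrable (fun y => φ y * fderiv ℝ G y eq') μ :=
    glue_integrable hΩ (fderiv_apply_contOn hΩ hG eq') hφ1.continuous hcs htsuppΩ
  have intJ1 : Integrable (fun y => fderiv ℝ φ y ep * H y) μ :=
    deriv_glue_integrable hΩ hH.continuousOn hφ1 hcs htsuppΩ ep
  have intJ3 : Integrable (fun y => fderiv ℝ φ y eq' * G y) μ :=
    deriv_glue_integrable hΩ hG.continuousOn hφ1 hcs htsuppΩ eq'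
  have intJ7 : Integrable (fun y => fderiv ℝ φ y ep * fderiv ℝ f y eq') μ :=
    deriv_glue_integrable hΩ (fderiv_apply_contOn hΩ hf eq') hφ1 hcs htsuppΩ ep
  have intJ5 : Integrable (fun y => fderiv ℝ φ y eq' * fderiv ℝ f y ep) μ :=
    deriv_glue_integrable hΩ (fderiv_apply_contOn hΩ hf ep) hφ1 hcs htsuppΩ eq'
  -- the remainder integral R
  have Rsplit : ∫ y, (fderiv ℝ φ y ep * (H y - fderiv ℝ f y eq')
        - fderiv ℝ φ y eq' * (G y - fderiv ℝ f y ep)) ∂μ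
      = ((∫ y, fderiv ℝ φ y ep * H y ∂μ) - (∫ y, fderiv ℝ φ y ep * fderiv ℝ f y eq' ∂μ))
        - ((∫ y, fderiv ℝ φ y eq' * G y ∂μ) - (∫ y, fderiv ℝ φ y eq' * fderiv ℝ f y ep ∂μ)) := by
    have e1 := integral_sub intJ1 intJ7
    have e2 := integral_sub intJ3 intJ5
    have e3 := integral_sub (intJ1.sub intJ7) (intJ3.sub intJ5)
    simp only [Pi.sub_apply] at e1 e2 e3
    rw [← e1, ← e2, ← e3]
    apply integral_congr_ae
    filter_upwards with y
    ring
  have intR : Integrable (fun y => fderiv ℝ φ y ep * (H y - fderiv ℝ f y eq')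
      - fderiv ℝ φ y eq' * (G y - fderiv ℝ f y ep)) μ := by
    have i1 : Integrable (fun y => fderiv ℝ φ y ep * (H y - fderiv ℝ f y eq')) μ :=
      deriv_glue_integrable hΩ (hH.continuousOn.sub (fderiv_apply_contOn hΩ hf eq'))
        hφ1 hcs htsuppΩ ep
    have i2 : Integrable (fun y => fderiv ℝ φ y eq' * (G y - fderiv ℝ f y ep)) μ :=
      deriv_glue_integrable hΩ (hG.continuousOn.sub (fderiv_apply_contOn hΩ hf ep))
        hφ1 hcs htsuppΩ eq'
    exact i1.sub i2
  have hRbound : |∫ y, (fderiv ℝ φ y ep * (H y - fderiv ℝ f y eq')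
        - fderiv ℝ φ y eq' * (G y - fderiv ℝ f y ep)) ∂μ|
      ≤ ((Cr1 + Cr2) * (M/r)) * (μ (B \ A)).toReal := by
    apply integral_bound intR (by positivity) hμBAfin
    · intro y hy
      have hyB : y ∈ B := hy.1
      calc |fderiv ℝ φ y ep * (H y - fderiv ℝ f y eq')
            - fderiv ℝ φ y eq' * (G y - fderiv ℝ f y ep)|
          ≤ |fderiv ℝ φ y ep * (H y - fderiv ℝ f y eq')|
            + |fderiv ℝ φ y eq' * (G y - fderiv ℝ f y ep)| := by
            rw [sub_eq_add_neg]
            exact (abs_add_le _ _).trans (by rw [abs_neg])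
        _ ≤ (M/r) * Cr1 + (M/r) * Cr2 := by
            apply add_le_add
            · rw [abs_mul]
              exact mul_le_mul (hφdb y ep hnep) (hCr1 y (hBK hyB)) (abs_nonneg _)
                (by positivity)
            · rw [abs_mul]
              exact mul_le_mul (hφdb y eq' hneq) (hCr2 y (hBK hyB)) (abs_nonneg _)
                (by positivity)
        _ = (Cr1 + Cr2) * (M/r) := by ring
    · intro y hy
      by_cases hyB : y ∈ B
      · have hyA : y ∈ A := by
          by_contra hnA
          exact hy ⟨hyB, hnA⟩
        obtain ⟨-, h1, h2⟩ := hyA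
        rw [h1, h2]
        ring
      · rw [hDφ0 y hyB]
        simp
  -- bounds on the eight signed-measure integrals
  have habs1 : ∀ y, |φ y| ≤ 1 := fun y => abs_le.2 ⟨by linarith [(hφ01 y).1], (hφ01 y).2⟩
  have hPp1 : |∫ y, φ y * H y ∂Pp| ≤ Ch * (Pp B).toReal := by
    apply integral_bound (glue_integrable hΩ hH.continuousOn hφ1.continuous hcs htsuppΩ)
      hCh0 (measure_ne_top _ _)
    · intro y hy
      rw [abs_mul]
      calc |φ y| * |H y| ≤ 1 * Ch :=
            mul_le_mul (habs1 y) (hCh y (hBK hy)) (abs_nonneg _) one_pos.le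
        _ = Ch := one_mul Ch
    · intro y hy
      rw [hφ0B y hy, zero_mul]
  have hNp1 : |∫ y, φ y * H y ∂Np| ≤ Ch * (Np B).toReal := by
    apply integral_bound (glue_integrable hΩ hH.continuousOn hφ1.continuous hcs htsuppΩ)
      hCh0 (measure_ne_top _ _)
    · intro y hy
      rw [abs_mul]
      calc |φ y| * |H y| ≤ 1 * Ch :=
            mul_le_mul (habs1 y) (hCh y (hBK hy)) (abs_nonneg _) one_pos.le
        _ = Ch := one_mul Ch
    · intro y hy
      rw [hφ0B y hy, zero_mul]
  have hPq2 : |∫ y, φ y * G y ∂Pq| ≤ Cg * (Pq B).toReal := by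
    apply integral_bound (glue_integrable hΩ hG.continuousOn hφ1.continuous hcs htsuppΩ)
      hCg0 (measure_ne_top _ _)
    · intro y hy
      rw [abs_mul]
      calc |φ y| * |G y| ≤ 1 * Cg :=
            mul_le_mul (habs1 y) (hCg y (hBK hy)) (abs_nonneg _) one_pos.le
        _ = Cg := one_mul Cg
    · intro y hy
      rw [hφ0B y hy, zero_mul]
  have hNq2 : |∫ y, φ y * G y ∂Nq| ≤ Cg * (Nq B).toReal := by
    apply integral_bound (glue_integrable hΩ hG.continuousOn hφ1.continuous hcs htsuppΩ)
      hCg0 (measure_ne_top _ _)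
    · intro y hy
      rw [abs_mul]
      calc |φ y| * |G y| ≤ 1 * Cg :=
            mul_le_mul (habs1 y) (hCg y (hBK hy)) (abs_nonneg _) one_pos.le
        _ = Cg := one_mul Cg
    · intro y hy
      rw [hφ0B y hy, zero_mul]
  have hPp3 : |∫ y, fderiv ℝ φ y eq' * f y ∂Pp| ≤ (M/r) * Cf * (Pp B).toReal := by
    apply integral_bound
      (deriv_glue_integrable hΩ hf.continuousOn hφ1 hcs htsuppΩ eq')
      (by positivity) (measure_ne_top _ _)
    · intro y hy
      rw [abs_mul]
      exact mul_le_mul (hφdb y eq' hneq) (hCf y (hBK hy)) (abs_nonneg _) (by positivity)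
    · intro y hy
      rw [hDφ0 y hy]
      simp
  have hNp3 : |∫ y, fderiv ℝ φ y eq' * f y ∂Np| ≤ (M/r) * Cf * (Np B).toReal := by
    apply integral_bound
      (deriv_glue_integrable hΩ hf.continuousOn hφ1 hcs htsuppΩ eq')
      (by positivity) (measure_ne_top _ _)
    · intro y hy
      rw [abs_mul]
      exact mul_le_mul (hφdb y eq' hneq) (hCf y (hBK hy)) (abs_nonneg _) (by positivity)
    · intro y hy
      rw [hDφ0 y hy]
      simp
  have hPq4 : |∫ y, fderiv ℝ φ y ep * f y ∂Pq| ≤ (M/r) * Cf * (Pq B).toReal := by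
    apply integral_bound
      (deriv_glue_integrable hΩ hf.continuousOn hφ1 hcs htsuppΩ ep)
      (by positivity) (measure_ne_top _ _)
    · intro y hy
      rw [abs_mul]
      exact mul_le_mul (hφdb y ep hnep) (hCf y (hBK hy)) (abs_nonneg _) (by positivity)
    · intro y hy
      rw [hDφ0 y hy]
      simp
  have hNq4 : |∫ y, fderiv ℝ φ y ep * f y ∂Nq| ≤ (M/r) * Cf * (Nq B).toReal := by
    apply integral_bound
      (deriv_glue_integrable hΩ hf.continuousOn hφ1 hcs htsuppΩ ep)
      (by positivity) (measure_ne_top _ _)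
    · intro y hy
      rw [abs_mul]
      exact mul_le_mul (hφdb y ep hnep) (hCf y (hBK hy)) (abs_nonneg _) (by positivity)
    · intro y hy
      rw [hDφ0 y hy]
      simp
  -- the Err0 term
  have hg0i : Integrable
      (fun y => φ y * fderiv ℝ H y ep - φ y * fderiv ℝ G y eq' - (a - b) * φ y) μ :=
    (int2.sub int4).sub (intφ.const_mul (a - b))
  have hErr0eq : ∫ y, (φ y * fderiv ℝ H y ep - φ y * fderiv ℝ G y eq' - (a - b) * φ y) ∂μ
      = (∫ y, φ y * fderiv ℝ H y ep ∂μ) - (∫ y, φ y * fderiv ℝ G y eq' ∂μ)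
        - (a - b) * (∫ y, φ y ∂μ) := by
    have e1 := integral_sub int2 int4
    have e2 := integral_sub (int2.sub int4) (intφ.const_mul (a - b))
    simp only [Pi.sub_apply] at e1 e2
    rw [e2, e1, integral_const_mul]
  have hErr0 : |∫ y, (φ y * fderiv ℝ H y ep - φ y * fderiv ℝ G y eq' - (a - b) * φ y) ∂μ|
      ≤ (2*δ₁) * (μ B).toReal := by
    apply integral_bound hg0i (by positivity) hμBfin
    · intro y hy
      have hy2 : y ∈ ball x r₂ := ball_subset_ball hrr₂.le hy
      obtain ⟨hH2, hG2⟩ := hr₂sub y hy2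
      have e : φ y * fderiv ℝ H y ep - φ y * fderiv ℝ G y eq' - (a - b) * φ y
          = φ y * ((fderiv ℝ H y ep - a) - (fderiv ℝ G y eq' - b)) := by ring
      rw [e, abs_mul]
      calc |φ y| * |(fderiv ℝ H y ep - a) - (fderiv ℝ G y eq' - b)|
          ≤ 1 * (2*δ₁) := by
            apply mul_le_mul (habs1 y) _ (abs_nonneg _) one_pos.le
            calc |(fderiv ℝ H y ep - a) - (fderiv ℝ G y eq' - b)|
                ≤ |fderiv ℝ H y ep - a| + |fderiv ℝ G y eq' - b| := by
                  rw [sub_eq_add_neg]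
                  exact (abs_add_le _ _).trans (by rw [abs_neg])
              _ ≤ 2*δ₁ := by linarith
        _ = 2*δ₁ := one_mul _
    · intro y hy
      rw [hφ0B y hy]
      ring
  -- lower bound on the integral of the bump
  have hIφnn : 0 ≤ ∫ y, φ y ∂μ := integral_nonneg (fun y => (hφ01 y).1)
  have hlow : (μ (Metric.ball x (ρ₀ * r))).toReal ≤ ∫ y, φ y ∂μ := by
    have h1 : ∫ y in Metric.ball x (ρ₀*r), φ y ∂μ = (μ (Metric.ball x (ρ₀*r))).toReal := by
      rw [setIntegral_congr_fun measurableSet_ball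
        (fun y hy => hφ1on y (ball_subset_closedBall hy))]
      simp
      rfl
    rw [← h1]
    exact setIntegral_le_integral intφ (Filter.Eventually.of_forall (fun y => (hφ01 y).1))
  -- total variation splits
  have htvsplitp : (Pp B).toReal + (Np B).toReal = (νp.totalVariation B).toReal := by
    have h1 : νp.totalVariation B = Pp B + Np B :=
      show (Pp + Np) B = Pp B + Np B from Measure.add_apply _ _ _
    rw [h1, ENNReal.toReal_add (measure_ne_top _ _) (measure_ne_top _ _)]
  have htvsplitq : (Pq B).toReal + (Nq B).toReal = (νq.totalVariation B).toReal := by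
    have h1 : νq.totalVariation B = Pq B + Nq B :=
      show (Pq + Nq) B = Pq B + Nq B from Measure.add_apply _ _ _
    rw [h1, ENNReal.toReal_add (measure_ne_top _ _) (measure_ne_top _ _)]
  -- abbreviations
  set μT := (μ B).toReal with hμTdef
  set μS := (μ (Metric.ball x (ρ₀ * r))).toReal with hμSdef
  set PpT := (Pp B).toReal with hPpT
  set NpT := (Np B).toReal with hNpT
  set PqT := (Pq B).toReal with hPqT
  set NqT := (Nq B).toReal with hNqT
  set μAT := (μ (B \ A)).toReal with hμAT
  set Iφ := ∫ y, φ y ∂μ with hIφdef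
  set J1 := ∫ y, fderiv ℝ φ y ep * H y ∂μ with hJ1
  set J2 := ∫ y, φ y * fderiv ℝ H y ep ∂μ with hJ2
  set J3 := ∫ y, fderiv ℝ φ y eq' * G y ∂μ with hJ3
  set J4 := ∫ y, φ y * fderiv ℝ G y eq' ∂μ with hJ4
  set J5 := ∫ y, fderiv ℝ φ y eq' * fderiv ℝ f y ep ∂μ with hJ5
  set J7 := ∫ y, fderiv ℝ φ y ep * fderiv ℝ f y eq' ∂μ with hJ7
  set S1 := ∫ y, fderiv ℝ (fun z => fderiv ℝ φ z eq') y ep * f y ∂μ with hS1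
  set S2 := ∫ y, fderiv ℝ (fun z => fderiv ℝ φ z ep) y eq' * f y ∂μ with hS2
  set P1 := ∫ y, φ y * H y ∂Pp with hP1
  set N1 := ∫ y, φ y * H y ∂Np with hN1
  set P2 := ∫ y, φ y * G y ∂Pq with hP2
  set N2 := ∫ y, φ y * G y ∂Nq with hN2
  set P3 := ∫ y, fderiv ℝ φ y eq' * f y ∂Pp with hP3
  set N3 := ∫ y, fderiv ℝ φ y eq' * f y ∂Np with hN3
  set P4 := ∫ y, fderiv ℝ φ y ep * f y ∂Pq with hP4
  set N4 := ∫ y, fderiv ℝ φ y ep * f y ∂Nq with hN4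
  set Rv := ∫ y, (fderiv ℝ φ y ep * (H y - fderiv ℝ f y eq')
      - fderiv ℝ φ y eq' * (G y - fderiv ℝ f y ep)) ∂μ with hRv
  set Ig0 := ∫ y, (φ y * fderiv ℝ H y ep - φ y * fderiv ℝ G y eq' - (a - b) * φ y) ∂μ
    with hIg0
  -- the key algebraic identity
  have hkey : (a - b) * Iφ
      = -(P1 - N1) + (P2 - N2) - Rv - (P3 - N3) + (P4 - N4) - Ig0 := by
    linarith [EqH, EqG, Eqf1, Eqf2, Seq, Rsplit, hErr0eq]
  -- destruct the absolute-value bounds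
  have d1 := abs_le.1 hPp1
  have d2 := abs_le.1 hNp1
  have d3 := abs_le.1 hPq2
  have d4 := abs_le.1 hNq2
  have d5 := abs_le.1 hPp3
  have d6 := abs_le.1 hNp3
  have d7 := abs_le.1 hPq4
  have d8 := abs_le.1 hNq4
  have d9 := abs_le.1 hRbound
  have d10 := abs_le.1 hErr0
  -- intermediate product inequalities
  have e_tvp : PpT + NpT ≤ δ₁ * r * μT := by rw [htvsplitp]; exact htvp
  have e_tvq : PqT + NqT ≤ δ₁ * r * μT := by rw [htvsplitq]; exact htvq
  have hr_le : δ₁ * r * μT ≤ δ₁ * μT := by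
    rw [mul_assoc]
    exact mul_le_mul_of_nonneg_left (mul_le_of_le_one_left hμT0.le hr1) hδ₁pos.le
  have eMr : (M/r) * Cf * (δ₁ * r * μT) = Cf * M * (δ₁ * μT) := by
    field_simp
  have eMr2 : (Cr1 + Cr2) * (M/r) * (δ₁ * r * μT) = (Cr1 + Cr2) * M * (δ₁ * μT) := by
    field_simp
  have m1 : Ch * (PpT + NpT) ≤ Ch * (δ₁ * r * μT) := mul_le_mul_of_nonneg_left e_tvp hCh0
  have m1' : Ch * (δ₁ * r * μT) ≤ Ch * (δ₁ * μT) := mul_le_mul_of_nonneg_left hr_le hCh0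
  have m2 : Cg * (PqT + NqT) ≤ Cg * (δ₁ * r * μT) := mul_le_mul_of_nonneg_left e_tvq hCg0
  have m2' : Cg * (δ₁ * r * μT) ≤ Cg * (δ₁ * μT) := mul_le_mul_of_nonneg_left hr_le hCg0
  have m3 : (M/r) * Cf * (PpT + NpT) ≤ (M/r) * Cf * (δ₁ * r * μT) :=
    mul_le_mul_of_nonneg_left e_tvp (by positivity)
  have m4 : (M/r) * Cf * (PqT + NqT) ≤ (M/r) * Cf * (δ₁ * r * μT) :=
    mul_le_mul_of_nonneg_left e_tvq (by positivity)
  have m5 : (Cr1 + Cr2) * (M/r) * μAT ≤ (Cr1 + Cr2) * (M/r) * (δ₁ * r * μT) :=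
    mul_le_mul_of_nonneg_left htvA (by positivity)
  -- the global bound
  have hq1 : (a - b) * Iφ ≤ (Ch + Cg + 2*Cf*M + (Cr1 + Cr2)*M + 2) * (δ₁ * μT) := by
    linarith [hkey, d1.1, d1.2, d2.1, d2.2, d3.1, d3.2, d4.1, d4.2, d5.1, d5.2,
      d6.1, d6.2, d7.1, d7.2, d8.1, d8.2, d9.1, d9.2, d10.1, d10.2,
      m1, m1', m2, m2', m3, m4, m5, eMr, eMr2]
  have hq2 : -((Ch + Cg + 2*Cf*M + (Cr1 + Cr2)*M + 2) * (δ₁ * μT)) ≤ (a - b) * Iφ := by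
    linarith [hkey, d1.1, d1.2, d2.1, d2.2, d3.1, d3.2, d4.1, d4.2, d5.1, d5.2,
      d6.1, d6.2, d7.1, d7.2, d8.1, d8.2, d9.1, d9.2, d10.1, d10.2,
      m1, m1', m2, m2', m3, m4, m5, eMr, eMr2]
  have hq : |(a - b) * Iφ| ≤ (Ch + Cg + 2*Cf*M + (Cr1 + Cr2)*M + 2) * (δ₁ * μT) :=
    abs_le.2 ⟨hq2, hq1⟩
  have hKK : (Ch + Cg + 2*Cf*M + (Cr1 + Cr2)*M + 2) * (δ₁ * μT) ≤ K * (δ₁ * μT) := by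
    apply mul_le_mul_of_nonneg_right _ (by positivity)
    rw [hK]
    linarith [mul_nonneg (add_nonneg hCr10 hCr20) hMpos.le]
  have hchain : δ * μS ≤ K * (δ₁ * μT) := by
    calc δ * μS = |a - b| * μS := by rw [hδ]
      _ ≤ |a - b| * Iφ := mul_le_mul_of_nonneg_left hlow (abs_nonneg _)
      _ = |(a - b) * Iφ| := by rw [abs_mul, abs_of_nonneg hIφnn]
      _ ≤ (Ch + Cg + 2*Cf*M + (Cr1 + Cr2)*M + 2) * (δ₁ * μT) := hq
      _ ≤ K * (δ₁ * μT) := hKK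
  have hlast : K * (δ₁ * μT) ≤ K * (δ₁ * (2 * μS)) :=
    mul_le_mul_of_nonneg_left (mul_le_mul_of_nonneg_left hfr hδ₁pos.le) hKpos.le
  have hδeq : K * (δ₁ * (2 * μS)) = (δ/2) * μS := by
    rw [hδ₁]
    field_simp
    ring
  have hfin : δ * μS ≤ (δ/2) * μS := by
    rw [← hδeq]
    exact hchain.trans hlast
  have hfin2 : (δ/2) * μS < δ * μS := by
    apply mul_lt_mul_of_pos_right _ hμSpos
    linarith
  linarith
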